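/- Let A_1,...,A_r, B_1,...,B_r, C be max-plus matrices of compatible sizes and set D = A_1⊠B_1^T ⊕ A_2⊠B_2^T ⊕ ... ⊕ A_r⊠B_r^T. The matrix equation A_1⊗X⊗B_1 ⊕ ... ⊕ A_r⊗X⊗B_r = C has a solution X if and only if D⊗(D^#⊗'vec(C)) = vec(C). -/

import Mathlib

/-!  Max-plus algebra over `R̄ = ℝ ∪ {-∞}`, embedded in `EReal = ℝ ∪ {±∞}`
(membership in `R̄` is expressed by the hypothesis `≠ ⊤`), together with the dual
min-plus operations `a ⊕' b = min a b` and `a ⊗' b` (`= a + b` when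
`{a,b} ≠ {-∞,+∞}`, and `(-∞) ⊗' (+∞) = (+∞) ⊗' (-∞) = +∞`). -/

/-- Dual addition `a ⊗' b` on `EReal`. -/
noncomputable def dualAdd (a b : EReal) : EReal := -((-a) + (-b))

/-- Max-plus matrix product over `EReal`. -/
noncomputable def eMul {α β γ : Type*} [Fintype β] (A : Matrix α β EReal)
    (B : Matrix β γ EReal) : Matrix α γ EReal :=
  fun i j => ⨆ k, A i k + B k j

/-- Max-plus matrix-vector product over `EReal`. -/
noncomputable def eMulVec {α β : Type*} [Fintype β] (A : Matrix α β EReal)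
    (x : β → EReal) : α → EReal :=
  fun i => ⨆ k, A i k + x k

/-- Min-plus matrix-vector product: `(M ⊗' v) i = min_k (M i k ⊗' v k)`. -/
noncomputable def eMinMulVec {α β : Type*} [Fintype β] (M : Matrix α β EReal)
    (v : β → EReal) : α → EReal :=
  fun i => ⨅ k, dualAdd (M i k) (v k)

/-- The conjugate `A^# = -Aᵀ`. -/
noncomputable def econj {α β : Type*} (A : Matrix α β EReal) : Matrix β α EReal := fun i j => -(A j i)

/-- Tropical tensor product over `EReal`: block matrix whose `(k,l)` block is `A ⊗ B k l`. -/
noncomputable def eTensor {α β γ δ : Type*} (A : Matrix α β EReal) (B : Matrix γ δ EReal) :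
    Matrix (γ × α) (δ × β) EReal :=
  fun p q => A p.2 q.2 + B p.1 q.1

/-- `vec X`: the columns of `X` stacked; component `(c, r)` is `X r c`. -/
def eVec {α β : Type*} (X : Matrix α β EReal) : β × α → EReal := fun p => X p.2 p.1

namespace TropAux

lemma exists_sup_eq {ι : Type*} [Fintype ι] [Nonempty ι] (f : ι → EReal) :
    ∃ i, (⨆ j, f j) = f i := by
  obtain ⟨i, hi⟩ := Finite.exists_max f
  exact ⟨i, le_antisymm (iSup_le hi) (le_iSup f i)⟩

lemma eSup_add {ι : Type*} [Fintype ι] (f : ι → EReal) (x : EReal) :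
    (⨆ i, f i) + x = ⨆ i, f i + x := by
  rcases isEmpty_or_nonempty ι with h | h
  · simp [iSup_of_empty]
  · obtain ⟨i, hi⟩ := exists_sup_eq f
    refine le_antisymm ?_ (iSup_le fun j => add_le_add_left (le_iSup f j) x)
    · rw [hi]; exact le_iSup (fun j => f j + x) i

lemma eAdd_sup {ι : Type*} [Fintype ι] (f : ι → EReal) (x : EReal) :
    x + (⨆ i, f i) = ⨆ i, x + f i := by
  rw [add_comm, eSup_add]
  exact iSup_congr fun i => add_comm _ _

lemma key_le (a c : EReal) (hc : c ≠ ⊤) : a + -(a + -c) ≤ c := by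
  induction a using EReal.rec with
  | bot => simp
  | top =>
      have h : -c ≠ ⊥ := by simp [EReal.neg_eq_bot_iff, hc]
      rw [EReal.top_add_of_ne_bot h]
      simp
  | coe a =>
      induction c using EReal.rec with
      | bot => simp [EReal.coe_add_top]
      | top => exact absurd rfl hc
      | coe c =>
          rw [← EReal.coe_neg, ← EReal.coe_add, ← EReal.coe_neg, ← EReal.coe_add,
            EReal.coe_le_coe_iff]
          linarith

lemma key_ge (a x c : EReal) (hc : c ≠ ⊤) (h : a + x ≤ c) : x ≤ -(a + -c) := by
  induction a using EReal.rec with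
  | bot => simp
  | top =>
      have hx : x = ⊥ := by
        by_contra hx
        rw [EReal.top_add_of_ne_bot hx] at h
        exact hc (top_le_iff.mp h)
      simp [hx]
  | coe a =>
      induction c using EReal.rec with
      | top => exact absurd rfl hc
      | bot =>
          have hb : (a : EReal) + x = ⊥ := le_bot_iff.mp h
          rcases EReal.add_eq_bot_iff.mp hb with h1 | h1
          · exact absurd h1 (EReal.coe_ne_bot a)
          · simp [h1, EReal.coe_add_top]
      | coe c =>
          induction x using EReal.rec with
          | bot => simp
          | top =>
              rw [EReal.add_top_of_ne_bot (EReal.coe_ne_bot a)] at h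
              exact absurd (top_le_iff.mp h) (EReal.coe_ne_top c)
          | coe x =>
              rw [← EReal.coe_add, EReal.coe_le_coe_iff] at h
              rw [← EReal.coe_neg, ← EReal.coe_add, ← EReal.coe_neg, EReal.coe_le_coe_iff]
              linarith

variable {α β : Type*} [Fintype α] [Fintype β]

lemma minmul_le (D : Matrix α β EReal) (c : α → EReal) (i : α) (k : β) :
    eMinMulVec (econj D) c k ≤ -(D i k + -(c i)) := by
  have h := iInf_le (fun j => dualAdd (econj D k j) (c j)) i
  simpa [eMinMulVec, dualAdd, econj, neg_neg] using h

lemma sub_solution (D : Matrix α β EReal) (c : α → EReal) (hc : ∀ i, c i ≠ ⊤) (i : α) :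
    eMulVec D (eMinMulVec (econj D) c) i ≤ c i := by
  refine iSup_le fun k => ?_
  calc D i k + eMinMulVec (econj D) c k ≤ D i k + -(D i k + -(c i)) :=
        add_le_add_right (minmul_le D c i k) _
    _ ≤ c i := key_le _ _ (hc i)

lemma greatest (D : Matrix α β EReal) (c : α → EReal) (hc : ∀ i, c i ≠ ⊤)
    (x : β → EReal) (hx : ∀ i, eMulVec D x i ≤ c i) (k : β) :
    x k ≤ eMinMulVec (econj D) c k := by
  refine le_iInf fun i => ?_
  have h1 : D i k + x k ≤ c i := le_trans (le_iSup (fun k => D i k + x k) k) (hx i)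
  simpa [dualAdd, econj, neg_neg] using key_ge _ _ _ (hc i) h1

lemma vec_solvable_iff (D : Matrix α β EReal) (c : α → EReal) (hc : ∀ i, c i ≠ ⊤) :
    (∃ x : β → EReal, (∀ k, x k ≠ ⊤) ∧ eMulVec D x = c) ↔
      eMulVec D (eMinMulVec (econj D) c) = c := by
  constructor
  · rintro ⟨x, hx, hEq⟩
    funext i
    refine le_antisymm (sub_solution D c hc i) ?_
    have h0 : c i = eMulVec D x i := (congrFun hEq i).symm
    rw [h0]
    refine iSup_le fun k => ?_
    calc D i k + x k ≤ D i k + eMinMulVec (econj D) c k :=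
          add_le_add_right (greatest D c hc x (fun j => le_of_eq (congrFun hEq j)) k) _
      _ ≤ eMulVec D (eMinMulVec (econj D) c) i :=
          le_iSup (fun k => D i k + eMinMulVec (econj D) c k) k
  · intro h
    refine ⟨fun k => if eMinMulVec (econj D) c k = ⊤ then ⊥ else eMinMulVec (econj D) c k,
      fun k => by dsimp only; split <;> simp_all, ?_⟩
    refine Eq.trans ?_ h
    funext i
    show (⨆ k, D i k + _) = ⨆ k, D i k + _
    refine iSup_congr fun k => ?_
    by_cases hk : eMinMulVec (econj D) c k = ⊤
    · have h1 : dualAdd (econj D k i) (c i) = ⊤ := by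
        have := iInf_le (fun j => dualAdd (econj D k j) (c j)) i
        rw [show (⨅ j, dualAdd (econj D k j) (c j)) = eMinMulVec (econj D) c k from rfl, hk] at this
        exact top_le_iff.mp this
      have h2 : D i k + -(c i) = ⊥ := by
        have : -(D i k + -(c i)) = ⊤ := by
          simpa [dualAdd, econj, neg_neg] using h1
        rwa [EReal.neg_eq_top_iff] at this
      have hD : D i k = ⊥ := by
        rcases EReal.add_eq_bot_iff.mp h2 with h3 | h3
        · exact h3
        · exact absurd (EReal.neg_eq_bot_iff.mp h3) (hc i)
      simp [hk, hD]
    · rw [if_neg hk]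

lemma rev3 {ι κ μ : Type*} (f : ι → κ → μ → EReal) :
    ⨆ a, ⨆ b, ⨆ c, f a b c = ⨆ c, ⨆ b, ⨆ a, f a b c := by
  apply le_antisymm
  · exact iSup_le fun a => iSup_le fun b => iSup_le fun c =>
      le_iSup_of_le c (le_iSup_of_le b (le_iSup (fun a => f a b c) a))
  · exact iSup_le fun c => iSup_le fun b => iSup_le fun a =>
      le_iSup_of_le a (le_iSup_of_le b (le_iSup (fun c => f a b c) c))

lemma vec_eq {r m n p q : ℕ}
    (A : Fin r → Matrix (Fin m) (Fin n) EReal)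
    (B : Fin r → Matrix (Fin p) (Fin q) EReal)
    (X : Matrix (Fin n) (Fin p) EReal) (l : Fin q) (i : Fin m) :
    eMulVec (fun u v => ⨆ t, eTensor (A t) (B t).transpose u v) (eVec X) (l, i)
      = ⨆ t, eMul (A t) (eMul X (B t)) i l := by
  show (⨆ kj : Fin p × Fin n, (⨆ t, A t i kj.2 + B t kj.1 l) + X kj.2 kj.1)
      = ⨆ t, ⨆ j, A t i j + ⨆ k, X j k + B t k l
  calc (⨆ kj : Fin p × Fin n, (⨆ t, A t i kj.2 + B t kj.1 l) + X kj.2 kj.1)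
      = ⨆ k : Fin p, ⨆ j : Fin n, (⨆ t, A t i j + B t k l) + X j k := iSup_prod
    _ = ⨆ k, ⨆ j, ⨆ t, (A t i j + B t k l + X j k) :=
        iSup_congr fun k => iSup_congr fun j => eSup_add _ _
    _ = ⨆ t, ⨆ j, ⨆ k, (A t i j + B t k l + X j k) := rev3 _
    _ = ⨆ t, ⨆ j, ⨆ k, A t i j + (X j k + B t k l) :=
        iSup_congr fun t => iSup_congr fun j => iSup_congr fun k => by
          rw [add_assoc, add_comm (B t k l) (X j k)]
    _ = ⨆ t, ⨆ j, A t i j + ⨆ k, X j k + B t k l :=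
        iSup_congr fun t => iSup_congr fun j => (eAdd_sup _ _).symm

end TropAux


theorem matrix_equation_solvable_iff (r m n p q : ℕ)
    (A : Fin r → Matrix (Fin m) (Fin n) EReal)
    (B : Fin r → Matrix (Fin p) (Fin q) EReal)
    (C : Matrix (Fin m) (Fin q) EReal)
    (hA : ∀ t i j, A t i j ≠ ⊤) (hB : ∀ t i j, B t i j ≠ ⊤)
    (hC : ∀ i j, C i j ≠ ⊤) :
    (∃ X : Matrix (Fin n) (Fin p) EReal, (∀ i j, X i j ≠ ⊤) ∧
        (fun i j => ⨆ t, eMul (A t) (eMul X (B t)) i j) = C) ↔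
      eMulVec (fun u v => ⨆ t, eTensor (A t) (B t).transpose u v)
          (eMinMulVec (econj (fun u v => ⨆ t, eTensor (A t) (B t).transpose u v)) (eVec C))
        = eVec C := by
  rw [← TropAux.vec_solvable_iff (fun u v => ⨆ t, eTensor (A t) (B t).transpose u v) (eVec C) (fun u : Fin q × Fin m => hC u.2 u.1)]
  constructor
  · rintro ⟨X, hX, hEq⟩
    refine ⟨eVec X, fun k => hX k.2 k.1, ?_⟩
    funext u
    obtain ⟨l, i⟩ := u
    exact (TropAux.vec_eq A B X l i).trans (congrFun (congrFun hEq i) l)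
  · rintro ⟨x, hx, hEq⟩
    refine ⟨fun j k => x (k, j), fun j k => hx (k, j), ?_⟩
    funext i l
    exact (TropAux.vec_eq A B (fun j k => x (k, j)) l i).symm.trans (congrFun hEq (l, i))
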